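/- For all real α and β, the sum of the linear entropies of the four single-qubit reduced density matrices of the Bell-type four-qubit state ψ(α,β) equals (1/2)·(2 − cos(4α) − cos(4β)). -/

import Mathlib

open Real Matrix

noncomputable section

/-- The index type of a four-qubit state: (momentum of particle 1, momentum of particle 2,
spin of particle 1, spin of particle 2). -/
abbrev Q4 := Fin 2 × Fin 2 × Fin 2 × Fin 2

/-- The density matrix `|ψ⟩⟨ψ|` of a pure four-qubit state. -/
def dm (ψ : Q4 → ℂ) : Matrix Q4 Q4 ℂ := fun s t => ψ s * (starRingEnd ℂ) (ψ t)

/-- The linear entropy `1 - Tr(σ²)`. -/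
def SL {n : Type*} [Fintype n] (σ : Matrix n n ℂ) : ℂ := 1 - Matrix.trace (σ * σ)

/-- Reduced density matrix of qubit 1 (momentum of particle 1). -/
def red1 (ρ : Matrix Q4 Q4 ℂ) : Matrix (Fin 2) (Fin 2) ℂ := fun a a' =>
  ∑ b : Fin 2, ∑ c : Fin 2, ∑ d : Fin 2, ρ (a, b, c, d) (a', b, c, d)

/-- Reduced density matrix of qubit 2 (momentum of particle 2). -/
def red2 (ρ : Matrix Q4 Q4 ℂ) : Matrix (Fin 2) (Fin 2) ℂ := fun b b' =>
  ∑ a : Fin 2, ∑ c : Fin 2, ∑ d : Fin 2, ρ (a, b, c, d) (a, b', c, d)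

/-- Reduced density matrix of qubit 3 (spin of particle 1). -/
def red3 (ρ : Matrix Q4 Q4 ℂ) : Matrix (Fin 2) (Fin 2) ℂ := fun c c' =>
  ∑ a : Fin 2, ∑ b : Fin 2, ∑ d : Fin 2, ρ (a, b, c, d) (a, b, c', d)

/-- Reduced density matrix of qubit 4 (spin of particle 2). -/
def red4 (ρ : Matrix Q4 Q4 ℂ) : Matrix (Fin 2) (Fin 2) ℂ := fun d d' =>
  ∑ a : Fin 2, ∑ b : Fin 2, ∑ c : Fin 2, ρ (a, b, c, d) (a, b, c, d')

/-- Momentum part: `cos α |p₊ p₋⟩ + sin α |p₋ p₊⟩`. -/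
def momPart (α : ℝ) : Fin 2 × Fin 2 → ℂ := fun p =>
  if p = (0, 1) then ((Real.cos α : ℝ) : ℂ)
  else if p = (1, 0) then ((Real.sin α : ℝ) : ℂ) else 0

/-- Bell-type spin part: `cos β |↑↓⟩ + sin β |↓↑⟩`. -/
def spinBell (β : ℝ) : Fin 2 × Fin 2 → ℂ := fun s =>
  if s = (0, 1) then ((Real.cos β : ℝ) : ℂ)
  else if s = (1, 0) then ((Real.sin β : ℝ) : ℂ) else 0

/-- The Bell-type four-qubit state ψ(α,β). -/
def bell (α β : ℝ) : Q4 → ℂ := fun q =>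
  momPart α (q.1, q.2.1) * spinBell β (q.2.2.1, q.2.2.2)

/-- the sum of the linear entropies of the four single-qubit reduced density
matrices of the Bell-type state ψ(α,β) equals `(1/2)(2 − cos 4α − cos 4β)`. -/
theorem stmt0 (α β : ℝ) :
    SL (red1 (dm (bell α β))) + SL (red2 (dm (bell α β))) +
      SL (red3 (dm (bell α β))) + SL (red4 (dm (bell α β))) =
      ((1 / 2 * (2 - Real.cos (4 * α) - Real.cos (4 * β)) : ℝ) : ℂ) := by
  have key : ∀ x : ℝ, Real.cos (4*x) = 1 - 8 * Real.sin x ^2 * Real.cos x ^2 := by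
    intro x
    have h1 := Real.cos_sq_add_sin_sq x
    have := Real.cos_two_mul (2*x)
    have h2 := Real.cos_two_mul x
    rw [show (4:ℝ)*x = 2*(2*x) by ring, Real.cos_two_mul, Real.cos_two_mul]
    nlinarith [h1]
  simp only [SL, red1, red2, red3, red4, dm, bell, momPart, spinBell, Matrix.trace,
    Matrix.mul_apply, Matrix.diag, Fin.sum_univ_two, Fin.isValue]
  norm_num [Prod.ext_iff, Complex.conj_ofReal, -Complex.ofReal_cos, -Complex.ofReal_sin]
  have h1 := Real.cos_sq_add_sin_sq α
  have h2 := Real.cos_sq_add_sin_sq β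
  rw [key α, key β]
  norm_cast
  rw [show ((1:ℂ)/2) = (((1:ℝ)/2:ℝ):ℂ) by norm_num, show (2:ℂ) = ((2:ℝ):ℂ) by norm_num, ← Complex.ofReal_sub, ← Complex.ofReal_sub, ← Complex.ofReal_mul, Complex.ofReal_inj]
  linear_combination ((-4)*Real.sin β^4 + (-4)*Real.cos β^2*Real.sin β^2 + (-4)*Real.cos β^4
      + (-4)*Real.sin α^2*Real.sin β^4 + (-4)*Real.sin α^2*Real.cos β^2*Real.sin β^2
      + (-4)*Real.sin α^2*Real.cos β^4 + (4)*Real.cos α^2*Real.cos β^2*Real.sin β^2 + (-4)*Real.cos α^2) * h1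
    + ((-4) + (-4)*Real.sin β^2 + (4)*Real.cos α^2 + (4)*Real.cos α^2*Real.sin β^2
      + (4)*Real.cos α^2*Real.cos β^2 + (-4)*Real.cos α^4 + (-4)*Real.cos α^4*Real.sin β^2
      + (-4)*Real.cos α^4*Real.cos β^2 + (-4)*Real.cos β^2) * h2
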